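/- Let G be a perfect graph on vertex set {1,…,n}. Then the Hansen polytope H(G) equals the set { x ∈ ℝ^{n+1} : −1 ≤ −x_0 + 2·Σ_{i∈K} x_i ≤ 1 for every clique K of G (including the empty clique) }. -/

import Mathlib

/-- A finset of vertices is stable (independent) in `G` if no two of its elements are adjacent. -/
def IsStable {n : ℕ} (G : SimpleGraph (Fin n)) (I : Finset (Fin n)) : Prop :=
  ∀ ⦃a⦄, a ∈ I → ∀ ⦃b⦄, b ∈ I → ¬ G.Adj a b

/-- The point `e_0 + ∑_{i ∈ I} e_i ∈ ℝ^{n+1}`. -/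
def hansenVert {n : ℕ} (I : Finset (Fin n)) : Fin (n + 1) → ℝ :=
  fun j => Fin.cases 1 (fun i => if i ∈ I then 1 else 0) j

/-- The Hansen polytope of `G`. -/
def hansenPolytope {n : ℕ} (G : SimpleGraph (Fin n)) : Set (Fin (n + 1) → ℝ) :=
  convexHull ℝ
    {x | ∃ I : Finset (Fin n), IsStable G I ∧ (x = hansenVert I ∨ x = -hansenVert I)}

/-- The clique number of a graph, as an element of `ℕ∞`. -/
noncomputable def cliqueNumber {V : Type*} (G : SimpleGraph V) : ℕ∞ :=
  ⨆ t ∈ {t : Finset V | G.IsClique (↑t : Set V)}, (t.card : ℕ∞)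

/-- A graph is perfect if for every induced subgraph the clique number equals
the chromatic number. -/
def IsPerfect {V : Type*} (G : SimpleGraph V) : Prop :=
  ∀ s : Set V, cliqueNumber (G.induce s) = (G.induce s).chromaticNumber

noncomputable section
open Finset
open scoped Classical

namespace HansenAux

variable {n : ℕ}

/-- adjacency in the blow-up graph on `Fin n × ℕ`: copies of adjacent vertices are adjacent,
and distinct copies of the same vertex are adjacent. -/
def bAdj (G : SimpleGraph (Fin n)) (w w' : Fin n × ℕ) : Prop :=
  G.Adj w.1 w'.1 ∨ (w.1 = w'.1 ∧ w ≠ w')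

lemma bAdj_irrefl (G : SimpleGraph (Fin n)) (w : Fin n × ℕ) : ¬ bAdj G w w := by
  rintro (h | ⟨_, h⟩)
  · exact G.irrefl h
  · exact h rfl

/-- the fiber of `S` over vertex `i`. -/
def fib (S : Finset (Fin n × ℕ)) (i : Fin n) : Finset (Fin n × ℕ) :=
  S.filter (fun w => w.1 = i)

def cliques (G : SimpleGraph (Fin n)) : Finset (Finset (Fin n)) :=
  univ.filter (fun K => G.IsClique (↑K : Set (Fin n)))

lemma mem_cliques {G : SimpleGraph (Fin n)} {K : Finset (Fin n)} :
    K ∈ cliques G ↔ G.IsClique (↑K : Set (Fin n)) := by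
  simp [cliques]

/-- max weight of a clique, weighted by fiber cardinalities. -/
def omegaW (G : SimpleGraph (Fin n)) (S : Finset (Fin n × ℕ)) : ℕ :=
  (cliques G).sup (fun K => ∑ i ∈ K, (fib S i).card)

lemma sum_le_omegaW {G : SimpleGraph (Fin n)} {K : Finset (Fin n)}
    (hK : G.IsClique (↑K : Set (Fin n))) (S : Finset (Fin n × ℕ)) :
    ∑ i ∈ K, (fib S i).card ≤ omegaW G S :=
  Finset.le_sup (f := fun K => ∑ i ∈ K, (fib S i).card) (mem_cliques.2 hK)

lemma fib_mono {S' S : Finset (Fin n × ℕ)} (h : S' ⊆ S) (i : Fin n) :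
    fib S' i ⊆ fib S i := filter_subset_filter _ h

lemma omegaW_mono (G : SimpleGraph (Fin n)) {S' S : Finset (Fin n × ℕ)} (h : S' ⊆ S) :
    omegaW G S' ≤ omegaW G S := by
  apply Finset.sup_le
  intro K hK
  refine le_trans ?_ (le_sup hK)
  exact Finset.sum_le_sum fun i _ => card_le_card (fib_mono h i)

lemma isClique_singleton (G : SimpleGraph (Fin n)) (i : Fin n) :
    G.IsClique (↑({i} : Finset (Fin n)) : Set (Fin n)) := by
  simp [Finset.coe_singleton]

lemma fib_card_le_omegaW (G : SimpleGraph (Fin n)) (S : Finset (Fin n × ℕ)) (i : Fin n) :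
    (fib S i).card ≤ omegaW G S := by
  have := sum_le_omegaW (isClique_singleton G i) S
  simpa using this

/-- the "hat" of a clique: all copies in `S` of vertices of `K`. -/
lemma card_hat {G : SimpleGraph (Fin n)} (S : Finset (Fin n × ℕ)) (K : Finset (Fin n)) :
    (S.filter (fun w => w.1 ∈ K)).card = ∑ i ∈ K, (fib (S.filter (fun w => w.1 ∈ K)) i).card := by
  apply Finset.card_eq_sum_card_fiberwise
  intro w hw
  exact (mem_filter.1 hw).2

lemma fib_filter_mem {S : Finset (Fin n × ℕ)} {K : Finset (Fin n)} {i : Fin n} (hi : i ∈ K) :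
    fib (S.filter (fun w => w.1 ∈ K)) i = fib S i := by
  ext w
  simp only [fib, mem_filter]
  constructor
  · rintro ⟨⟨h1, _⟩, h3⟩; exact ⟨h1, h3⟩
  · rintro ⟨h1, h3⟩; exact ⟨⟨h1, h3 ▸ hi⟩, h3⟩

lemma card_hat' {G : SimpleGraph (Fin n)} (S : Finset (Fin n × ℕ)) (K : Finset (Fin n)) :
    (S.filter (fun w => w.1 ∈ K)).card = ∑ i ∈ K, (fib S i).card := by
  rw [card_hat (G := G) S K]
  exact Finset.sum_congr rfl fun i hi => by rw [fib_filter_mem hi]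


/-- Base case: if every fiber has at most one element, perfection of `G` gives a coloring. -/
lemma base_coloring {G : SimpleGraph (Fin n)} (hG : IsPerfect G)
    (S : Finset (Fin n × ℕ)) (hS : ∀ i, (fib S i).card ≤ 1) :
    ∃ c : Fin n × ℕ → ℕ, (∀ w ∈ S, c w < omegaW G S) ∧
      (∀ w ∈ S, ∀ w' ∈ S, bAdj G w w' → c w ≠ c w') := by
  set s : Set (Fin n) := (↑(S.image Prod.fst) : Set (Fin n)) with hs
  have hcn : cliqueNumber (G.induce s) ≤ (omegaW G S : ℕ∞) := by
    apply iSup₂_le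
    intro t ht
    have hKclique : G.IsClique (↑(t.image (fun v : s => (v : Fin n))) : Set (Fin n)) := by
      intro a ha b hb hab
      simp only [Finset.coe_image, Set.mem_image, Finset.mem_coe] at ha hb
      obtain ⟨va, hva, rfl⟩ := ha
      obtain ⟨vb, hvb, rfl⟩ := hb
      have : (G.induce s).Adj va vb := ht hva hvb (fun h => hab (by rw [h]))
      exact this
    have hcard : (t.image (fun v : s => (v : Fin n))).card = t.card :=
      Finset.card_image_of_injective _ Subtype.val_injective
    have hge : ∀ i ∈ t.image (fun v : s => (v : Fin n)), 1 ≤ (fib S i).card := by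
      intro i hi
      obtain ⟨v, hv, rfl⟩ := Finset.mem_image.1 hi
      have : (v : Fin n) ∈ S.image Prod.fst := by
        have := v.2
        exact Finset.mem_coe.mp this
      obtain ⟨w, hw, hwe⟩ := Finset.mem_image.1 this
      exact Finset.card_pos.2 ⟨w, Finset.mem_filter.2 ⟨hw, hwe⟩⟩
    have : t.card ≤ omegaW G S := by
      calc t.card = (t.image (fun v : s => (v : Fin n))).card := hcard.symm
        _ = ∑ _i ∈ t.image (fun v : s => (v : Fin n)), 1 := by rw [Finset.sum_const, smul_eq_mul, mul_one]
        _ ≤ ∑ i ∈ t.image (fun v : s => (v : Fin n)), (fib S i).card := Finset.sum_le_sum hge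
        _ ≤ omegaW G S := sum_le_omegaW hKclique S
    exact_mod_cast this
  have hcol : (G.induce s).Colorable (omegaW G S) := by
    rw [← SimpleGraph.chromaticNumber_le_iff_colorable]
    rw [← hG s]
    exact hcn
  obtain ⟨C⟩ := hcol
  refine ⟨fun w => if h : w.1 ∈ S.image Prod.fst then (C ⟨w.1, by rwa [hs, Finset.mem_coe]⟩ : Fin _).val else 0, ?_, ?_⟩
  · intro w hw
    have h : w.1 ∈ S.image Prod.fst := Finset.mem_image.2 ⟨w, hw, rfl⟩
    simp only [dif_pos h]
    exact (C _).isLt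
  · intro w hw w' hw' hadj
    have h : w.1 ∈ S.image Prod.fst := Finset.mem_image.2 ⟨w, hw, rfl⟩
    have h' : w'.1 ∈ S.image Prod.fst := Finset.mem_image.2 ⟨w', hw', rfl⟩
    simp only [dif_pos h, dif_pos h']
    rcases hadj with hadj | ⟨heq, hne⟩
    · have : (G.induce s).Adj ⟨w.1, by rwa [hs, Finset.mem_coe]⟩ ⟨w'.1, by rwa [hs, Finset.mem_coe]⟩ := hadj
      have := C.valid this
      exact fun hv => this (Fin.val_injective hv)
    · exfalso
      have h2 : 1 < (fib S w.1).card := by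
        apply Finset.one_lt_card.2
        exact ⟨w, Finset.mem_filter.2 ⟨hw, rfl⟩, w', Finset.mem_filter.2 ⟨hw', heq.symm⟩, hne⟩
      have := hS w.1
      omega


lemma bAdj_symm (G : SimpleGraph (Fin n)) {w w' : Fin n × ℕ} (h : bAdj G w w') : bAdj G w' w := by
  rcases h with h | ⟨h1, h2⟩
  · exact Or.inl h.symm
  · exact Or.inr ⟨h1.symm, fun e => h2 e.symm⟩

/-- The main coloring theorem for blow-ups of perfect graphs. -/
theorem blowup_coloring {G : SimpleGraph (Fin n)} (hG : IsPerfect G) (S : Finset (Fin n × ℕ)) :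
    ∃ c : Fin n × ℕ → ℕ, (∀ w ∈ S, c w < omegaW G S) ∧
      (∀ w ∈ S, ∀ w' ∈ S, bAdj G w w' → c w ≠ c w') := by
  induction S using Finset.strongInductionOn with
  | _ S IH =>
  by_cases hS : ∀ i, (fib S i).card ≤ 1
  · exact base_coloring hG S hS
  push_neg at hS
  obtain ⟨v, hv⟩ := hS
  obtain ⟨w0, hw0f, w1, hw1f, hne⟩ := Finset.one_lt_card.1 hv
  have hw0S : w0 ∈ S := (mem_filter.1 hw0f).1
  have hw1S : w1 ∈ S := (mem_filter.1 hw1f).1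
  have hw0v : w0.1 = v := (mem_filter.1 hw0f).2
  have hw1v : w1.1 = v := (mem_filter.1 hw1f).2
  set S' := S.erase w1 with hS'def
  have hS'sub : S' ⊆ S := erase_subset _ _
  have hS'ss : S' ⊂ S := erase_ssubset hw1S
  obtain ⟨c', hc'b, hc'p⟩ := IH S' hS'ss
  set ω' := omegaW G S' with hω'
  have hω'le : ω' ≤ omegaW G S := omegaW_mono G hS'sub
  have hw0S' : w0 ∈ S' := mem_erase.2 ⟨hne, hw0S⟩
  have hω'pos : 1 ≤ ω' := by
    have h1 := fib_card_le_omegaW G S' w0.1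
    have h2 : 0 < (fib S' w0.1).card := card_pos.2 ⟨w0, mem_filter.2 ⟨hw0S', rfl⟩⟩
    omega
  have hfibS' : ∀ i, i ≠ v → fib S' i = fib S i := by
    intro i hi
    ext w
    simp only [fib, mem_filter, hS'def, mem_erase]
    constructor
    · rintro ⟨⟨_, h2⟩, h3⟩; exact ⟨h2, h3⟩
    · rintro ⟨h2, h3⟩
      refine ⟨⟨?_, h2⟩, h3⟩
      rintro rfl
      exact hi (h3.symm.trans hw1v)
  have hfibv : fib S' v = (fib S v).erase w1 := by
    ext w
    simp only [fib, mem_filter, hS'def, mem_erase]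
    tauto
  have hcards : ∀ i, (fib S i).card ≤ (fib S' i).card + (if i = v then 1 else 0) := by
    intro i
    by_cases hi : i = v
    · subst hi
      rw [hfibv, if_pos rfl, Finset.card_erase_of_mem hw1f]
      have : 0 < (fib S i).card := card_pos.2 ⟨w1, hw1f⟩
      omega
    · rw [hfibS' i hi, if_neg hi]
      omega
  have hωup : omegaW G S ≤ ω' + 1 := by
    apply Finset.sup_le
    intro K hK
    calc ∑ i ∈ K, (fib S i).card
        ≤ ∑ i ∈ K, ((fib S' i).card + if i = v then 1 else 0) :=
          Finset.sum_le_sum fun i _ => hcards i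
      _ = (∑ i ∈ K, (fib S' i).card) + ∑ i ∈ K, (if i = v then 1 else 0) :=
          Finset.sum_add_distrib
      _ ≤ ω' + 1 := by
          have h1 : ∑ i ∈ K, (fib S' i).card ≤ ω' :=
            Finset.le_sup (f := fun K => ∑ i ∈ K, (fib S' i).card) hK
          have h2 : (∑ i ∈ K, if i = v then (1:ℕ) else 0) ≤ 1 := by
            rw [Finset.sum_ite_eq' K v (fun _ => (1:ℕ))]
            split <;> omega
          omega
  by_cases hcase : omegaW G S = ω'
  case neg =>
    have hωeq : omegaW G S = ω' + 1 := by omega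
    refine ⟨fun w => if w = w1 then ω' else c' w, ?_, ?_⟩
    · intro w hw
      by_cases h : w = w1
      · simp only [if_pos h]; omega
      · simp only [if_neg h]
        have := hc'b w (mem_erase.2 ⟨h, hw⟩)
        omega
    · intro w hw w' hw' hadj
      by_cases h : w = w1 <;> by_cases h' : w' = w1
      · rw [h, h'] at hadj
        exact absurd hadj (bAdj_irrefl G w1)
      · simp only [if_pos h, if_neg h']
        have := hc'b w' (mem_erase.2 ⟨h', hw'⟩)
        omega
      · simp only [if_neg h, if_pos h']
        have := hc'b w (mem_erase.2 ⟨h, hw⟩)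
        omega
      · simp only [if_neg h, if_neg h']
        exact hc'p w (mem_erase.2 ⟨h, hw⟩) w' (mem_erase.2 ⟨h', hw'⟩) hadj
  case pos =>
    set A := S'.filter (fun w => c' w = c' w0) with hA
    have hw0A : w0 ∈ A := mem_filter.2 ⟨hw0S', rfl⟩
    have hAsub : A ⊆ S' := filter_subset _ _
    have hAstable : ∀ w ∈ A, ∀ w' ∈ A, ¬ bAdj G w w' := by
      intro w hw w' hw' hadj
      exact hc'p w (hAsub hw) w' (hAsub hw') hadj
        (((mem_filter.1 hw).2).trans ((mem_filter.1 hw').2).symm)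
    have hAfib : ∀ w ∈ A, ∀ w' ∈ A, w.1 = w'.1 → w = w' := by
      intro w hw w' hw' heq
      by_contra hne'
      exact hAstable w hw w' hw' (Or.inr ⟨heq, hne'⟩)
    set D := A.erase w0 with hD
    have hDsub : D ⊆ S' := (erase_subset _ _).trans hAsub
    have hDv : ∀ w ∈ D, w.1 ≠ v := by
      intro w hw hwv
      exact (mem_erase.1 hw).1
        (hAfib w (mem_of_mem_erase hw) w0 hw0A (hwv.trans hw0v.symm))
    set S'' := S' \ D with hS''
    have hS''sub : S'' ⊆ S' := sdiff_subset
    have hfib'' : ∀ i, (fib S'' i).card + (fib D i).card = (fib S' i).card := by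
      intro i
      have hsub : fib D i ⊆ fib S' i := fib_mono hDsub i
      have he : fib S'' i = fib S' i \ fib D i := by
        ext w
        simp only [fib, mem_filter, mem_sdiff, hS'']
        tauto
      rw [he, Finset.card_sdiff_add_card_eq_card hsub]
    have hkey : ∀ K ∈ cliques G, ∑ i ∈ K, (fib S'' i).card < ω' := by
      intro K hK
      have hKc : G.IsClique (↑K : Set (Fin n)) := mem_cliques.1 hK
      by_contra hge
      push_neg at hge
      have hle' : ∑ i ∈ K, (fib S' i).card ≤ ω' := sum_le_omegaW hKc S'
      have hle'' : ∑ i ∈ K, (fib S'' i).card ≤ ∑ i ∈ K, (fib S' i).card :=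
        Finset.sum_le_sum fun i _ => card_le_card (fib_mono hS''sub i)
      have heq2 : ∑ i ∈ K, (fib S'' i).card = ω' := le_antisymm (hle''.trans hle') hge
      have heqsum : ∑ i ∈ K, (fib S' i).card = ω' := by omega
      have hDempty : ∀ i ∈ K, (fib D i).card = 0 := by
        have hsplit : ∑ i ∈ K, ((fib S'' i).card + (fib D i).card) = ω' := by
          rw [Finset.sum_congr rfl (fun i _ => hfib'' i)]
          exact heqsum
        rw [Finset.sum_add_distrib, heq2] at hsplit
        have hzero : ∑ i ∈ K, (fib D i).card = 0 := by omega
        exact fun i hi => (Finset.sum_eq_zero_iff.1 hzero) i hi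
      set hat := S'.filter (fun w => w.1 ∈ K) with hhat
      have hhatcard : hat.card = ω' := by
        rw [hhat, card_hat' (G := G) S' K]
        exact heqsum
      have hinj : Set.InjOn c' ↑hat := by
        intro w hw w' hw' hcc
        by_contra hne'
        have hwm := mem_filter.1 (mem_coe.1 hw)
        have hw'm := mem_filter.1 (mem_coe.1 hw')
        have hadj : bAdj G w w' := by
          by_cases hfst : w.1 = w'.1
          · exact Or.inr ⟨hfst, hne'⟩
          · exact Or.inl (hKc hwm.2 hw'm.2 hfst)
        exact hc'p w hwm.1 w' hw'm.1 hadj hcc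
      have himg : hat.image c' = Finset.range ω' := by
        apply Finset.eq_of_subset_of_card_le
        · intro j hj
          obtain ⟨w, hw, rfl⟩ := Finset.mem_image.1 hj
          exact Finset.mem_range.2 (hc'b w (mem_filter.1 hw).1)
        · rw [Finset.card_range, Finset.card_image_of_injOn hinj, hhatcard]
      have hmemimg : c' w0 ∈ hat.image c' := by
        rw [himg]
        exact Finset.mem_range.2 (hc'b w0 hw0S')
      obtain ⟨w, hwhat, hcw⟩ := Finset.mem_image.1 hmemimg
      by_cases hww0 : w = w0
      · subst hww0
        have hvK : v ∈ K := hw0v ▸ (mem_filter.1 hwhat).2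
        have hlt : ∑ i ∈ K, (fib S' i).card < ∑ i ∈ K, (fib S i).card := by
          apply Finset.sum_lt_sum (fun i _ => card_le_card (fib_mono hS'sub i))
          refine ⟨v, hvK, ?_⟩
          rw [hfibv, Finset.card_erase_of_mem hw1f]
          have : 0 < (fib S v).card := card_pos.2 ⟨w1, hw1f⟩
          omega
        have hub := sum_le_omegaW hKc S
        omega
      · have hwA : w ∈ A := mem_filter.2 ⟨(mem_filter.1 hwhat).1, hcw⟩
        have hwD : w ∈ D := mem_erase.2 ⟨hww0, hwA⟩
        have hwfib : w ∈ fib D w.1 := mem_filter.2 ⟨hwD, rfl⟩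
        have h0 := hDempty w.1 (mem_filter.1 hwhat).2
        rw [Finset.card_eq_zero] at h0
        rw [h0] at hwfib
        exact absurd hwfib (Finset.notMem_empty w)
    have hS''ω : omegaW G S'' + 1 ≤ ω' := by
      have hlt : omegaW G S'' < ω' := by
        rw [omegaW]
        exact (Finset.sup_lt_iff (show (⊥ : ℕ) < ω' from Nat.lt_of_lt_of_le Nat.zero_lt_one hω'pos)).2 hkey
      omega
    have hS''ss : S'' ⊂ S := Finset.ssubset_of_subset_of_ssubset hS''sub hS'ss
    obtain ⟨c'', hc''b, hc''p⟩ := IH S'' hS''ss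
    have hmem : ∀ u ∈ S, u ∉ S'' → u = w1 ∨ u ∈ D := by
      intro u hu hu2
      by_cases h1 : u = w1
      · exact Or.inl h1
      · right
        have huS' : u ∈ S' := mem_erase.2 ⟨h1, hu⟩
        by_contra hD2
        exact hu2 (mem_sdiff.2 ⟨huS', hD2⟩)
    have hstab : ∀ u, (u = w1 ∨ u ∈ D) → ∀ u', (u' = w1 ∨ u' ∈ D) → ¬ bAdj G u u' := by
      have hw1D : ∀ u' ∈ D, ¬ bAdj G w1 u' := by
        intro u' hu' hadj
        have h1 : u'.1 ≠ v := hDv u' hu'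
        rcases hadj with hadj | ⟨heq, _⟩
        · rw [hw1v, ← hw0v] at hadj
          exact hAstable w0 hw0A u' (mem_of_mem_erase hu') (Or.inl hadj)
        · exact h1 (heq.symm.trans hw1v)
      rintro u (rfl | hu) u' (rfl | hu') hadj
      · exact bAdj_irrefl G _ hadj
      · exact hw1D u' hu' hadj
      · exact hw1D u hu (bAdj_symm G hadj)
      · exact hAstable u (mem_of_mem_erase hu) u' (mem_of_mem_erase hu') hadj
    refine ⟨fun w => if w ∈ S'' then c'' w else ω' - 1, ?_, ?_⟩
    · intro w hw
      by_cases h : w ∈ S''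
      · simp only [if_pos h]
        have := hc''b w h
        omega
      · simp only [if_neg h]
        omega
    · intro w hw w' hw' hadj
      by_cases h : w ∈ S'' <;> by_cases h' : w' ∈ S''
      · simp only [if_pos h, if_pos h']
        exact hc''p w h w' h' hadj
      · simp only [if_pos h, if_neg h']
        have := hc''b w h
        omega
      · simp only [if_neg h, if_pos h']
        have := hc''b w' h'
        omega
      · exact absurd hadj (hstab w (hmem w hw h) w' (hmem w' hw' h'))


def chi (I : Finset (Fin n)) : Fin n → ℝ := fun i => if i ∈ I then 1 else 0

lemma card_inter_le_one {G : SimpleGraph (Fin n)} {K I : Finset (Fin n)}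
    (hK : G.IsClique (↑K : Set (Fin n))) (hI : IsStable G I) :
    (K.filter (· ∈ I)).card ≤ 1 := by
  rw [Finset.card_le_one]
  intro a ha b hb
  simp only [Finset.mem_filter] at ha hb
  by_contra hab
  exact hI ha.2 hb.2 (hK ha.1 hb.1 hab)

lemma sum_chi_clique {G : SimpleGraph (Fin n)} {K I : Finset (Fin n)}
    (hK : G.IsClique (↑K : Set (Fin n))) (hI : IsStable G I) :
    ∑ i ∈ K, chi I i = ((K.filter (· ∈ I)).card : ℝ) ∧
      (0:ℝ) ≤ ((K.filter (· ∈ I)).card : ℝ) ∧ ((K.filter (· ∈ I)).card : ℝ) ≤ 1 := by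
  refine ⟨?_, by positivity, ?_⟩
  · unfold chi; rw [Finset.sum_boole]
  · exact_mod_cast card_inter_le_one hK hI

lemma easy_subset (G : SimpleGraph (Fin n)) :
    hansenPolytope G ⊆
      {x : Fin (n + 1) → ℝ | ∀ K : Finset (Fin n), G.IsClique (↑K : Set (Fin n)) →
        -1 ≤ -(x 0) + 2 * (∑ i ∈ K, x i.succ) ∧ -(x 0) + 2 * (∑ i ∈ K, x i.succ) ≤ 1} := by
  apply convexHull_min
  · rintro x ⟨I, hI, hx | hx⟩ K hK
    · subst hx
      obtain ⟨h1, h2, h3⟩ := sum_chi_clique hK hI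
      have h0 : hansenVert I 0 = 1 := rfl
      have hs : ∀ i : Fin n, hansenVert I i.succ = chi I i := fun i => by
        simp [hansenVert, chi]
      simp only [h0, hs, h1]
      constructor <;> linarith
    · subst hx
      obtain ⟨h1, h2, h3⟩ := sum_chi_clique hK hI
      have h0 : (-hansenVert I) 0 = -1 := by simp [hansenVert]
      have hs : ∀ i : Fin n, (-hansenVert I) i.succ = -chi I i := fun i => by
        simp [hansenVert, chi]
      simp only [h0, hs, Finset.sum_neg_distrib, h1]
      constructor <;> linarith
  · intro x hx y hy a b ha hb hab
    intro K hK
    obtain ⟨hx1, hx2⟩ := hx K hK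
    obtain ⟨hy1, hy2⟩ := hy K hK
    have e : -((a • x + b • y) 0) + 2 * (∑ i ∈ K, (a • x + b • y) i.succ)
        = a * (-(x 0) + 2 * (∑ i ∈ K, x i.succ)) + b * (-(y 0) + 2 * (∑ i ∈ K, y i.succ)) := by
      have : ∀ i ∈ K, (a • x + b • y) i.succ = a * x i.succ + b * y i.succ := by
        intro i _; simp [smul_eq_mul]
      rw [Finset.sum_congr rfl this, Finset.sum_add_distrib, ← Finset.mul_sum, ← Finset.mul_sum]
      simp only [Pi.add_apply, Pi.smul_apply, smul_eq_mul]
      ring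
    rw [e]
    constructor <;> nlinarith


def stabGen (G : SimpleGraph (Fin n)) : Set (Fin n → ℝ) :=
  {x | ∃ I : Finset (Fin n), IsStable G I ∧ x = chi I}

def stabSet (G : SimpleGraph (Fin n)) : Set (Fin n → ℝ) := convexHull ℝ (stabGen G)

lemma rat_mem_stab {G : SimpleGraph (Fin n)} (hG : IsPerfect G) (q : ℕ) (hq : 0 < q)
    (y : Fin n → ℕ) (h : ∀ K : Finset (Fin n), G.IsClique (↑K : Set (Fin n)) → ∑ i ∈ K, y i ≤ q) :
    (fun i => (y i : ℝ) / q) ∈ stabSet G := by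
  set S : Finset (Fin n × ℕ) :=
    (univ : Finset (Fin n)).biUnion (fun i => (Finset.range (y i)).image (fun a => (i, a))) with hSdef
  have hmemS : ∀ w : Fin n × ℕ, w ∈ S ↔ w.2 < y w.1 := by
    intro w
    simp only [hSdef, Finset.mem_biUnion, Finset.mem_image, Finset.mem_range, Finset.mem_univ,
      true_and]
    constructor
    · rintro ⟨i, a, ha, rfl⟩
      exact ha
    · intro h2
      exact ⟨w.1, w.2, h2, rfl⟩
  have hfib : ∀ i, (fib S i).card = y i := by
    intro i
    have he : fib S i = (Finset.range (y i)).image (fun a => (i, a)) := by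
      ext w
      obtain ⟨wi, wa⟩ := w
      simp only [fib, mem_filter, hmemS, Finset.mem_image, Finset.mem_range]
      constructor
      · rintro ⟨h1, h2⟩
        subst h2
        exact ⟨wa, h1, rfl⟩
      · rintro ⟨a, ha, he2⟩
        obtain ⟨rfl, rfl⟩ : i = wi ∧ a = wa := by
          constructor <;> [exact congrArg Prod.fst he2; exact congrArg Prod.snd he2]
        exact ⟨ha, rfl⟩
    rw [he, Finset.card_image_of_injective _ (fun a b hab => by simpa using congrArg Prod.snd hab),
      Finset.card_range]
  have hω : omegaW G S ≤ q := by
    apply Finset.sup_le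
    intro K hK
    rw [Finset.sum_congr rfl (fun i _ => hfib i)]
    exact h K (mem_cliques.1 hK)
  obtain ⟨c, hcb, hcp⟩ := blowup_coloring hG S
  set T : ℕ → Finset (Fin n) := fun j => (S.filter (fun w => c w = j)).image Prod.fst with hTdef
  have hT : ∀ j, IsStable G (T j) := by
    intro j a ha b hb hadj
    obtain ⟨w, hw, rfl⟩ := Finset.mem_image.1 ha
    obtain ⟨w', hw', rfl⟩ := Finset.mem_image.1 hb
    have h1 := mem_filter.1 hw
    have h2 := mem_filter.1 hw'
    exact hcp w h1.1 w' h2.1 (Or.inl hadj) (h1.2.trans h2.2.symm)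
  have hcount : ∀ i, ((Finset.range q).filter (fun j => i ∈ T j)).card = y i := by
    intro i
    have he : (Finset.range q).filter (fun j => i ∈ T j)
        = (Finset.range (y i)).image (fun a => c (i, a)) := by
      ext j
      simp only [mem_filter, Finset.mem_range, Finset.mem_image]
      constructor
      · rintro ⟨hj, hmem⟩
        obtain ⟨w, hw, hwi⟩ := Finset.mem_image.1 hmem
        have h1 := mem_filter.1 hw
        have h2 : w.2 < y w.1 := (hmemS w).1 h1.1
        refine ⟨w.2, by rwa [hwi] at h2, ?_⟩
        have : (i, w.2) = w := by
          obtain ⟨wi, wa⟩ := w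
          simp only at hwi ⊢
          rw [hwi]
        rw [this]
        exact h1.2
      · rintro ⟨a, ha, rfl⟩
        have hmem : (i, a) ∈ S := (hmemS (i, a)).2 ha
        refine ⟨lt_of_lt_of_le (hcb (i, a) hmem) hω, ?_⟩
        exact Finset.mem_image.2 ⟨(i, a), mem_filter.2 ⟨hmem, rfl⟩, rfl⟩
    rw [he, Finset.card_image_of_injOn, Finset.card_range]
    intro a ha b hb hcc
    by_contra hne
    have hadj : bAdj G (i, a) (i, b) := Or.inr ⟨rfl, fun hp => hne (by simpa using congrArg Prod.snd hp)⟩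
    exact hcp (i, a) ((hmemS _).2 (Finset.mem_range.1 (Finset.mem_coe.1 ha)))
      (i, b) ((hmemS _).2 (Finset.mem_range.1 (Finset.mem_coe.1 hb))) hadj hcc
  have hmass : (0:ℝ) < ∑ _j ∈ Finset.range q, (1:ℝ) := by
    rw [Finset.sum_const, Finset.card_range, nsmul_eq_mul, mul_one]
    exact_mod_cast hq
  have hcm : (Finset.range q).centerMass (fun _ => (1:ℝ)) (fun j => chi (T j)) ∈ stabSet G := by
    apply Finset.centerMass_mem_convexHull
    · intro j _
      norm_num
    · exact hmass
    · intro j _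
      exact ⟨T j, hT j, rfl⟩
  have hpt : (fun i => (y i : ℝ) / q) = (Finset.range q).centerMass (fun _ => (1:ℝ)) (fun j => chi (T j)) := by
    rw [Finset.centerMass]
    simp only [one_smul, Finset.sum_const, Finset.card_range, nsmul_eq_mul, mul_one]
    funext i
    rw [Pi.smul_apply, Finset.sum_apply, smul_eq_mul]
    have hb : ∑ j ∈ Finset.range q, chi (T j) i
        = (((Finset.range q).filter (fun j => i ∈ T j)).card : ℝ) := by
      unfold chi
      rw [Finset.sum_boole]
    rw [hb, hcount i, div_eq_inv_mul]
  rw [hpt]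
  exact hcm

lemma stabGen_finite (G : SimpleGraph (Fin n)) : (stabGen G).Finite :=
  Set.Finite.subset (Set.finite_range (fun I : Finset (Fin n) => chi I))
    (by rintro x ⟨I, _, rfl⟩; exact ⟨I, rfl⟩)

lemma stabSet_closed (G : SimpleGraph (Fin n)) : IsClosed (stabSet G) :=
  ((stabGen_finite G).isCompact_convexHull ℝ).isClosed

lemma qstab_subset_stab {G : SimpleGraph (Fin n)} (hG : IsPerfect G) (x : Fin n → ℝ)
    (hx0 : ∀ i, 0 ≤ x i)
    (hx : ∀ K : Finset (Fin n), G.IsClique (↑K : Set (Fin n)) → ∑ i ∈ K, x i ≤ 1) :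
    x ∈ stabSet G := by
  rw [← (stabSet_closed G).closure_eq, Metric.mem_closure_iff]
  intro ε hε
  obtain ⟨q, hq⟩ := exists_nat_gt (1/ε)
  have hq0 : 0 < q := by
    have h1 : (0:ℝ) < 1/ε := by positivity
    have : (0:ℝ) < q := lt_trans h1 hq
    exact_mod_cast this
  have hqR : (0:ℝ) < q := by exact_mod_cast hq0
  set y : Fin n → ℕ := fun i => ⌊(q:ℝ) * x i⌋₊ with hy
  have hyle : ∀ i, (y i : ℝ) ≤ q * x i := fun i => Nat.floor_le (by
    have := hx0 i
    positivity)
  have hygt : ∀ i, (q:ℝ) * x i < y i + 1 := fun i => Nat.lt_floor_add_one _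
  have hcl : ∀ K : Finset (Fin n), G.IsClique (↑K : Set (Fin n)) → ∑ i ∈ K, y i ≤ q := by
    intro K hK
    have hr : ((∑ i ∈ K, y i : ℕ) : ℝ) ≤ q := by
      push_cast
      calc ∑ i ∈ K, (y i : ℝ) ≤ ∑ i ∈ K, (q:ℝ) * x i := Finset.sum_le_sum (fun i _ => hyle i)
        _ = q * ∑ i ∈ K, x i := by rw [Finset.mul_sum]
        _ ≤ q * 1 := mul_le_mul_of_nonneg_left (hx K hK) (le_of_lt hqR)
        _ = q := mul_one _
    exact_mod_cast hr
  refine ⟨fun i => (y i : ℝ)/q, rat_mem_stab hG q hq0 y hcl, ?_⟩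
  rw [dist_pi_lt_iff hε]
  intro i
  rw [Real.dist_eq, abs_lt]
  have h2 : (1:ℝ) < q * ε := by
    have := (div_lt_iff₀ hε).1 hq
    linarith [mul_comm ε (q:ℝ)]
  have h3 : (1:ℝ)/q < ε := by
    rw [div_lt_iff₀ hqR]
    linarith [mul_comm (q:ℝ) ε]
  have h4 : (y i :ℝ)/q ≤ x i := by
    rw [div_le_iff₀ hqR]
    linarith [hyle i, mul_comm (q:ℝ) (x i)]
  have h5 : x i < ((y i :ℝ)+1)/q := by
    rw [lt_div_iff₀ hqR]
    linarith [hygt i, mul_comm (x i) (q:ℝ)]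
  rw [add_div] at h5
  constructor <;> linarith


def liftAff (n : ℕ) : (Fin n → ℝ) →ᵃ[ℝ] (Fin (n+1) → ℝ) where
  toFun := fun y => Fin.cons 1 y
  linear :=
    { toFun := fun y => Fin.cons 0 y
      map_add' := by
        intro a b
        funext j
        refine Fin.cases ?_ ?_ j <;> simp
      map_smul' := by
        intro c a
        funext j
        refine Fin.cases ?_ ?_ j <;> simp }
  map_vadd' := by
    intro p v
    funext j
    refine Fin.cases ?_ ?_ j <;> simp [vadd_eq_add]

lemma liftAff_apply (y : Fin n → ℝ) : liftAff n y = Fin.cons 1 y := rfl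

lemma lift_chi (I : Finset (Fin n)) : liftAff n (chi I) = hansenVert I := by
  funext j
  refine Fin.cases ?_ ?_ j <;> simp [liftAff_apply, hansenVert, chi]

lemma lift_mem {G : SimpleGraph (Fin n)} {y : Fin n → ℝ} (hy : y ∈ stabSet G) :
    Fin.cons (1:ℝ) y ∈ hansenPolytope G := by
  have h1 : liftAff n y ∈ (liftAff n) '' (convexHull ℝ (stabGen G)) := ⟨y, hy, rfl⟩
  rw [AffineMap.image_convexHull] at h1
  have h2 : (liftAff n) '' (stabGen G) ⊆
      {x | ∃ I : Finset (Fin n), IsStable G I ∧ (x = hansenVert I ∨ x = -hansenVert I)} := by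
    rintro _ ⟨w, ⟨I, hI, rfl⟩, rfl⟩
    exact ⟨I, hI, Or.inl (lift_chi I)⟩
  exact convexHull_mono h2 h1

lemma lift_neg_mem {G : SimpleGraph (Fin n)} {z : Fin n → ℝ} (hz : z ∈ stabSet G) :
    -(Fin.cons (1:ℝ) z) ∈ hansenPolytope G := by
  set f : (Fin n → ℝ) →ᵃ[ℝ] (Fin (n+1) → ℝ) :=
    ((-(LinearMap.id : (Fin (n+1) → ℝ) →ₗ[ℝ] (Fin (n+1) → ℝ))).toAffineMap).comp (liftAff n)
    with hf
  have hfa : ∀ y, f y = -(Fin.cons (1:ℝ) y) := fun y => rfl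
  have h1 : f z ∈ f '' (convexHull ℝ (stabGen G)) := ⟨z, hz, rfl⟩
  rw [AffineMap.image_convexHull] at h1
  have h2 : f '' (stabGen G) ⊆
      {x | ∃ I : Finset (Fin n), IsStable G I ∧ (x = hansenVert I ∨ x = -hansenVert I)} := by
    rintro _ ⟨w, ⟨I, hI, rfl⟩, rfl⟩
    refine ⟨I, hI, Or.inr ?_⟩
    rw [hfa, ← lift_chi I]
    rfl
  exact hfa z ▸ convexHull_mono h2 h1


lemma zero_mem_stab (G : SimpleGraph (Fin n)) : (0 : Fin n → ℝ) ∈ stabSet G := by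
  apply subset_convexHull
  refine ⟨∅, ?_, ?_⟩
  · intro a ha
    exact absurd ha (Finset.notMem_empty a)
  · funext i
    simp [chi]

lemma hard_subset {G : SimpleGraph (Fin n)} (hG : IsPerfect G) (x : Fin (n+1) → ℝ)
    (hx : ∀ K : Finset (Fin n), G.IsClique (↑K : Set (Fin n)) →
      -1 ≤ -(x 0) + 2 * (∑ i ∈ K, x i.succ) ∧ -(x 0) + 2 * (∑ i ∈ K, x i.succ) ≤ 1) :
    x ∈ hansenPolytope G := by
  have hempty := hx ∅ (by simp)
  simp only [Finset.sum_empty, mul_zero, add_zero] at hempty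
  set lam : ℝ := (1 + x 0)/2 with hlam
  have hlam0 : 0 ≤ lam := by rw [hlam]; linarith [hempty.2]
  have hlam1 : lam ≤ 1 := by rw [hlam]; linarith [hempty.1]
  set x' : Fin n → ℝ := fun i => x i.succ with hx'
  have hKb : ∀ K : Finset (Fin n), G.IsClique (↑K : Set (Fin n)) →
      lam - 1 ≤ ∑ i ∈ K, x' i ∧ ∑ i ∈ K, x' i ≤ lam := by
    intro K hK
    obtain ⟨h1, h2⟩ := hx K hK
    have he : ∑ i ∈ K, x i.succ = ∑ i ∈ K, x' i := rfl
    rw [he] at h1 h2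
    constructor <;> [skip; skip] <;> rw [hlam] <;> linarith
  set p : Fin n → ℝ := fun i => max (x' i) 0 with hp
  set m : Fin n → ℝ := fun i => max (-(x' i)) 0 with hm
  have hpm : ∀ i, p i - m i = x' i := by
    intro i
    rcases le_total 0 (x' i) with h | h
    · rw [hp, hm]
      simp only []
      rw [max_eq_left h, max_eq_right (neg_nonpos.2 h)]
      ring
    · rw [hp, hm]
      simp only []
      rw [max_eq_right h, max_eq_left (neg_nonneg.2 h)]
      ring
  have hp0 : ∀ i, 0 ≤ p i := fun i => le_max_right _ _
  have hm0 : ∀ i, 0 ≤ m i := fun i => le_max_right _ _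
  have hpsum : ∀ K : Finset (Fin n), G.IsClique (↑K : Set (Fin n)) → ∑ i ∈ K, p i ≤ lam := by
    intro K hK
    have hsub : G.IsClique (↑(K.filter (fun i => 0 ≤ x' i)) : Set (Fin n)) :=
      hK.subset (Finset.coe_subset.2 (Finset.filter_subset _ _))
    have he : ∑ i ∈ K, p i = ∑ i ∈ K.filter (fun i => 0 ≤ x' i), x' i := by
      rw [Finset.sum_filter]
      apply Finset.sum_congr rfl
      intro i _
      by_cases h : 0 ≤ x' i
      · rw [if_pos h]
        exact max_eq_left h
      · rw [if_neg h]
        exact max_eq_right (le_of_not_ge h)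
    rw [he]
    exact (hKb _ hsub).2
  have hmsum : ∀ K : Finset (Fin n), G.IsClique (↑K : Set (Fin n)) → ∑ i ∈ K, m i ≤ 1 - lam := by
    intro K hK
    have hsub : G.IsClique (↑(K.filter (fun i => ¬ 0 ≤ x' i)) : Set (Fin n)) :=
      hK.subset (Finset.coe_subset.2 (Finset.filter_subset _ _))
    have he : ∑ i ∈ K, m i = ∑ i ∈ K.filter (fun i => ¬ 0 ≤ x' i), (-(x' i)) := by
      rw [Finset.sum_filter]
      apply Finset.sum_congr rfl
      intro i _
      by_cases h : ¬ 0 ≤ x' i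
      · rw [if_pos h]
        exact max_eq_left (neg_nonneg.2 (le_of_not_ge h))
      · rw [if_neg h]
        push_neg at h
        exact max_eq_right (neg_nonpos.2 h)
    have h2 := (hKb _ hsub).1
    rw [he, Finset.sum_neg_distrib]
    linarith
  have hsingle : ∀ i, lam - 1 ≤ x' i ∧ x' i ≤ lam := by
    intro i
    have h := hKb {i} (isClique_singleton G i)
    simpa using h
  set y : Fin n → ℝ := if lam = 0 then 0 else lam⁻¹ • p with hy
  set z : Fin n → ℝ := if lam = 1 then 0 else (1 - lam)⁻¹ • m with hzdef
  have hymem : y ∈ stabSet G := by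
    rw [hy]
    split_ifs with h
    · exact zero_mem_stab G
    · apply qstab_subset_stab hG
      · intro i
        simp only [Pi.smul_apply, smul_eq_mul]
        exact mul_nonneg (inv_nonneg.2 hlam0) (hp0 i)
      · intro K hK
        have he : ∀ i ∈ K, (lam⁻¹ • p) i = lam⁻¹ * p i := by
          intro i _
          simp
        rw [Finset.sum_congr rfl he, ← Finset.mul_sum]
        calc lam⁻¹ * ∑ i ∈ K, p i ≤ lam⁻¹ * lam :=
              mul_le_mul_of_nonneg_left (hpsum K hK) (inv_nonneg.2 hlam0)
          _ = 1 := inv_mul_cancel₀ h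
  have hzmem : z ∈ stabSet G := by
    rw [hzdef]
    split_ifs with h
    · exact zero_mem_stab G
    · have hl1 : 0 ≤ 1 - lam := by linarith
      have hl2 : (1 : ℝ) - lam ≠ 0 := fun he => h (by linarith [sub_eq_zero.1 he])
      apply qstab_subset_stab hG
      · intro i
        simp only [Pi.smul_apply, smul_eq_mul]
        exact mul_nonneg (inv_nonneg.2 hl1) (hm0 i)
      · intro K hK
        have he : ∀ i ∈ K, ((1-lam)⁻¹ • m) i = (1-lam)⁻¹ * m i := by
          intro i _
          simp
        rw [Finset.sum_congr rfl he, ← Finset.mul_sum]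
        calc (1-lam)⁻¹ * ∑ i ∈ K, m i ≤ (1-lam)⁻¹ * (1-lam) :=
              mul_le_mul_of_nonneg_left (hmsum K hK) (inv_nonneg.2 hl1)
          _ = 1 := inv_mul_cancel₀ hl2
  have hyeq : ∀ i, lam * y i = p i := by
    intro i
    rw [hy]
    split_ifs with h
    · have h2 := (hsingle i).2
      rw [h] at h2
      have : p i = 0 := max_eq_right h2
      rw [this, h]
      simp
    · simp only [Pi.smul_apply, smul_eq_mul]
      rw [← mul_assoc, mul_inv_cancel₀ h, one_mul]
  have hzeq : ∀ i, (1 - lam) * z i = m i := by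
    intro i
    rw [hzdef]
    split_ifs with h
    · have h1 := (hsingle i).1
      rw [h] at h1
      have : m i = 0 := max_eq_right (by simpa using h1)
      rw [this, h]
      simp
    · have hl2 : (1 : ℝ) - lam ≠ 0 := fun he => h (by linarith [sub_eq_zero.1 he])
      simp only [Pi.smul_apply, smul_eq_mul]
      rw [← mul_assoc, mul_inv_cancel₀ hl2, one_mul]
  have hxeq : lam • (Fin.cons (1:ℝ) y : Fin (n+1) → ℝ)
      + (1 - lam) • (-(Fin.cons (1:ℝ) z : Fin (n+1) → ℝ)) = x := by
    funext j
    refine Fin.cases ?_ ?_ j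
    · simp only [Pi.add_apply, Pi.smul_apply, Pi.neg_apply, Fin.cons_zero, smul_eq_mul]
      rw [hlam]
      ring
    · intro i
      simp only [Pi.add_apply, Pi.smul_apply, Pi.neg_apply, Fin.cons_succ, smul_eq_mul]
      have h1 := hyeq i
      have h2 := hzeq i
      have h3 := hpm i
      have h4 : x i.succ = x' i := rfl
      rw [h4]
      linarith
  rw [← hxeq]
  exact (convex_convexHull ℝ _) (lift_mem hymem) (lift_neg_mem hzmem) hlam0 (by linarith)
    (by ring)

end HansenAux

/-- For a perfect graph `G`, the Hansen polytope `H(G)` is exactly the set of points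
`x ∈ ℝ^{n+1}` satisfying `−1 ≤ −x_0 + 2·∑_{i ∈ K} x_i ≤ 1` for every clique `K` of `G`. -/
theorem hansen_facet_description {n : ℕ} (G : SimpleGraph (Fin n)) (hG : IsPerfect G) :
    hansenPolytope G =
      {x : Fin (n + 1) → ℝ | ∀ K : Finset (Fin n), G.IsClique (↑K : Set (Fin n)) →
        -1 ≤ -(x 0) + 2 * (∑ i ∈ K, x i.succ) ∧ -(x 0) + 2 * (∑ i ∈ K, x i.succ) ≤ 1} := by
  apply Set.Subset.antisymm
  · exact HansenAux.easy_subset G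
  · intro x hx
    exact HansenAux.hard_subset hG x hx
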